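/- The class of induced matchings (graphs of maximum degree at most 1) has unbounded lettericity: for every k there is an induced matching whose lettericity exceeds k. Equivalently, the graph nP_2 (a perfect matching on 2n vertices) has lettericity at least n. -/

import Mathlib

/-- `G` has lettericity at most `k`. -/
def HasLettericityLE {V : Type*} (G : SimpleGraph V) (k : ℕ) : Prop :=
  ∃ (P : Fin k → Fin k → Prop) (w : List (Fin k)) (f : V ≃ Fin w.length),
    ∀ u v : V, G.Adj u v ↔
      ((f u < f v ∧ P (w.get (f u)) (w.get (f v))) ∨
       (f v < f u ∧ P (w.get (f v)) (w.get (f u))))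

/-- The perfect matching `nP₂` on `2n` vertices. -/
def matchingGraph (n : ℕ) : SimpleGraph (Fin n × Fin 2) where
  Adj u v := u.1 = v.1 ∧ u.2 ≠ v.2
  symm := by constructor; rintro u v ⟨h₁, h₂⟩; exact ⟨h₁.symm, h₂.symm⟩
  loopless := by constructor; rintro u ⟨-, h⟩; exact h rfl

lemma matchings_lettericity_lower (n k : ℕ)
    (h : HasLettericityLE (matchingGraph n) k) : n ≤ k := by
  obtain ⟨P, w, f, hf⟩ := h
  have key : ∀ i : Fin n, ∃ a b : Fin w.length, a < b ∧ P (w.get a) (w.get b) ∧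
      (f.symm a).1 = i ∧ (f.symm b).1 = i := by
    intro i
    have hadj : (matchingGraph n).Adj ((i, 0) : Fin n × Fin 2) ((i, 1) : Fin n × Fin 2) := ⟨rfl, by simp⟩
    rcases (hf _ _).1 hadj with ⟨hlt, hP⟩ | ⟨hlt, hP⟩
    · exact ⟨f (i, 0), f (i, 1), hlt, hP, by simp, by simp⟩
    · exact ⟨f (i, 1), f (i, 0), hlt, hP, by simp, by simp⟩
  choose a b hab hP ha hb using key
  have hinj : Function.Injective (fun i => w.get (a i)) := by
    intro i j hij
    by_contra hne
    -- positions are distinct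
    have hane : a i ≠ a j := by
      intro h'
      apply hne
      rw [← ha i, ← ha j, h']
    -- wlog via cases
    have contra : ∀ i j : Fin n, i ≠ j → w.get (a i) = w.get (a j) → a i < a j → False := by
      intro i j hne hij hlt
      have hlt' : a i < b j := lt_trans hlt (hab j)
      have hP' : P (w.get (a i)) (w.get (b j)) := by rw [hij]; exact hP j
      have hadj : (matchingGraph n).Adj (f.symm (a i)) (f.symm (b j)) := by
        rw [hf]
        left
        simpa using ⟨hlt', hP'⟩
      have : i = (j : Fin n) := by
        rw [← ha i, ← hb j]; exact hadj.1
      exact hne this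
    rcases lt_or_gt_of_ne hane with h' | h'
    · exact contra i j hne hij h'
    · exact contra j i (Ne.symm hne) hij.symm h'
  simpa using Fintype.card_le_of_injective _ hinj

/-- the class of induced matchings has unbounded lettericity: for every `k`
there is an induced matching whose lettericity exceeds `k`; equivalently, `nP₂` has
lettericity at least `n`. -/
theorem matchings_unbounded_lettericity :
    (∀ k : ℕ, ∃ n : ℕ, ¬ HasLettericityLE (matchingGraph n) k) ∧
    (∀ n k : ℕ, HasLettericityLE (matchingGraph n) k → n ≤ k) := by
  refine ⟨fun k => ⟨k + 1, fun h => ?_⟩, matchings_lettericity_lower⟩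
  exact Nat.not_succ_le_self k (matchings_lettericity_lower _ _ h)
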